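/- Let α > 1 be real, n ≥ 1 be real, let τ > 0 satisfy Σ_{i=1}^∞ i^{-α}/(i^{-α} + τ) = n, and define Ω by n·Ω = Σ_{i=1}^∞ (i^{-α}/(i^{-α} + τ))² (this series converges). Then (π(α − 1)/(α² sin(π/α))) · τ^{-1/α} − 1 ≤ n·Ω ≤ (π(α − 1)/(α² sin(π/α))) · τ^{-1/α}. -/

import Mathlib

open Real MeasureTheory Set

lemma beta_real (c : ℝ) (hc : 0 < c) (hc1 : c < 1) :
    ∫ x in (0:ℝ)..1, x ^ (c-1) * (1-x) ^ (1-c) = (1-c) * (π / Real.sin (π * c)) := by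
  have h1 : Complex.Gamma c * Complex.Gamma (2-c) =
      Complex.Gamma (c + (2-c)) * Complex.betaIntegral c (2-c) := by
    apply Complex.Gamma_mul_Gamma_eq_betaIntegral
    · simpa using hc
    · simp [Complex.sub_re]; norm_num; linarith
  have h2 : Complex.betaIntegral (c:ℂ) (2-c) =
      ((∫ x in (0:ℝ)..1, x ^ (c-1) * (1-x) ^ (1-c) : ℝ) : ℂ) := by
    rw [Complex.betaIntegral, ← intervalIntegral.integral_ofReal]
    apply intervalIntegral.integral_congr
    intro x hx
    rw [uIcc_of_le zero_le_one] at hx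
    have hx0 : (0:ℝ) ≤ x := hx.1
    have hx1 : (0:ℝ) ≤ 1 - x := by linarith [hx.2]
    simp only [Complex.ofReal_mul, Complex.ofReal_cpow hx0, Complex.ofReal_cpow hx1]
    push_cast
    ring_nf
  have h3 : ((c:ℂ)) + (2 - c) = ((2:ℝ):ℂ) := by push_cast; ring
  have h4 : ((2:ℂ) - c) = (((2 - c : ℝ)):ℂ) := by push_cast; ring
  rw [h2, h3, h4, Complex.Gamma_ofReal, Complex.Gamma_ofReal, Complex.Gamma_ofReal,
    Real.Gamma_two] at h1
  rw [← Complex.ofReal_mul, ← Complex.ofReal_mul, Complex.ofReal_inj] at h1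
  have h5 : Real.Gamma (2 - c) = (1 - c) * Real.Gamma (1 - c) := by
    have : (2:ℝ) - c = (1 - c) + 1 := by ring
    rw [this, Real.Gamma_add_one (by linarith)]
  have h6 := Real.Gamma_mul_Gamma_one_sub c
  rw [one_mul] at h1
  rw [← h1, h5]
  rw [show Real.Gamma c * ((1-c) * Real.Gamma (1-c)) = (1-c) * (Real.Gamma c * Real.Gamma (1-c)) by ring, h6]

lemma subst_one (c : ℝ) (hc : 0 < c) (hc1 : c < 1) :
    ∫ x in Ioo (0:ℝ) 1, x ^ (c-1) * (1-x) ^ (1-c)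
      = ∫ u in Ioi (0:ℝ), u ^ (c-1) * ((1+u)^2)⁻¹ := by
  have hne : ∀ u : ℝ, u ∈ Ioi (0:ℝ) → (1+u) ≠ 0 := fun u hu => by
    have : (0:ℝ) < u := hu; positivity
  have hderiv : ∀ u ∈ Ioi (0:ℝ), HasDerivWithinAt (fun u : ℝ => 1 - (1+u)⁻¹)
      (((1+u)^2)⁻¹) (Ioi 0) u := by
    intro u hu
    have h0 : (0:ℝ) < u := hu
    have h1 : HasDerivAt (fun u : ℝ => 1+u) 1 u := (hasDerivAt_id u).const_add 1
    have h2 := (h1.inv (by positivity)).const_sub 1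
    have e : ((1+u)^2)⁻¹ = -(-1 / (1 + u) ^ 2) := by ring
    rw [e]; exact h2.hasDerivWithinAt
  have hinj : InjOn (fun u : ℝ => 1 - (1+u)⁻¹) (Ioi 0) := by
    intro u hu v hv h
    have h0 : (0:ℝ) < u := hu
    have h1 : (0:ℝ) < v := hv
    simp only [sub_right_inj] at h
    have := inv_injective h
    linarith [this]
  have himg : (fun u : ℝ => 1 - (1+u)⁻¹) '' Ioi 0 = Ioo 0 1 := by
    ext y
    constructor
    · rintro ⟨u, hu, rfl⟩
      have h0 : (0:ℝ) < u := hu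
      have h1 : (1:ℝ) < 1 + u := by linarith
      have h2 : (1+u)⁻¹ < 1 := by rw [inv_lt_one_iff₀]; right; exact h1
      have h3 : 0 < (1+u)⁻¹ := by positivity
      exact ⟨by linarith, by linarith⟩
    · intro hy
      refine ⟨y / (1 - y), ?_, ?_⟩
      · exact div_pos hy.1 (by linarith [hy.2])
      · have h1 : (1:ℝ) - y ≠ 0 := by linarith [hy.2]
        field_simp
        ring
  rw [← himg, integral_image_eq_integral_abs_deriv_smul measurableSet_Ioi hderiv hinj]
  apply setIntegral_congr_fun measurableSet_Ioi
  intro u hu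
  have h0 : (0:ℝ) < u := hu
  have h1 : (0:ℝ) < 1 + u := by linarith
  have h2 : (1:ℝ) - (1+u)⁻¹ = u * (1+u)⁻¹ := by field_simp; ring
  have h3 : (1:ℝ) - u * (1+u)⁻¹ = (1+u)⁻¹ := by field_simp; ring
  simp only [smul_eq_mul]
  rw [h2, h3, Real.mul_rpow h0.le (by positivity),
    abs_of_pos (by positivity : (0:ℝ) < ((1+u)^2)⁻¹)]
  have h4 : ((1+u)⁻¹) ^ (c-1) * ((1+u)⁻¹) ^ (1-c) = 1 := by
    rw [← Real.rpow_add (by positivity)]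
    norm_num
  calc ((1+u)^2)⁻¹ * (u ^ (c-1) * ((1+u)⁻¹) ^ (c-1) * ((1+u)⁻¹) ^ (1-c))
      = ((1+u)^2)⁻¹ * (u ^ (c-1) * (((1+u)⁻¹) ^ (c-1) * ((1+u)⁻¹) ^ (1-c))) := by ring
    _ = u ^ (c-1) * ((1+u)^2)⁻¹ := by rw [h4]; ring

lemma integral_g (α τ : ℝ) (hα : 1 < α) (hτ : 0 < τ) :
    ∫ x in Ioi (0:ℝ), ((1 + τ * x ^ α)^2)⁻¹
      = (α⁻¹ * τ ^ (-(1/α))) * ∫ u in Ioi (0:ℝ), u ^ (1/α - 1) * ((1+u)^2)⁻¹ := by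
  have hα0 : (0:ℝ) < α := by linarith
  set f : ℝ → ℝ := fun u => (u/τ) ^ (1/α) with hf
  have hderiv : ∀ u ∈ Ioi (0:ℝ), HasDerivWithinAt f
      ((1/α) * (u/τ) ^ (1/α - 1) * τ⁻¹) (Ioi 0) u := by
    intro u hu
    have h0 : (0:ℝ) < u := hu
    have h1 : HasDerivAt (fun u : ℝ => u/τ) τ⁻¹ u := by
      simpa using (hasDerivAt_id u).div_const τ
    have h2 : HasDerivAt (fun y : ℝ => y ^ (1/α)) ((1/α) * (u/τ) ^ (1/α - 1)) (u/τ) :=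
      Real.hasDerivAt_rpow_const (Or.inl (by positivity))
    exact (h2.comp u h1).hasDerivWithinAt
  have hinj : InjOn f (Ioi 0) := by
    intro u hu v hv h
    have h0 : (0:ℝ) < u := hu
    have h1 : (0:ℝ) < v := hv
    have h2 : u/τ = v/τ :=
      Real.rpow_left_injOn (x := 1/α) (one_div_ne_zero hα0.ne')
        (le_of_lt (div_pos h0 hτ)) (le_of_lt (div_pos h1 hτ)) h
    field_simp at h2
    exact h2
  have himg : f '' Ioi 0 = Ioi 0 := by
    ext y
    constructor
    · rintro ⟨u, hu, rfl⟩
      have h0 : (0:ℝ) < u := hu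
      exact Real.rpow_pos_of_pos (div_pos h0 hτ) _
    · intro hy
      have hy0 : (0:ℝ) < y := hy
      refine ⟨τ * y ^ α, mem_Ioi.mpr (by positivity), ?_⟩
      simp only [hf]
      have hc : τ * y ^ α / τ = y ^ α := by field_simp
      rw [hc, ← Real.rpow_mul hy0.le, mul_one_div, div_self hα0.ne', Real.rpow_one]
  calc ∫ x in Ioi (0:ℝ), ((1 + τ * x ^ α)^2)⁻¹
      = ∫ x in f '' Ioi 0, ((1 + τ * x ^ α)^2)⁻¹ := by rw [himg]
    _ = ∫ u in Ioi (0:ℝ), |(1/α) * (u/τ) ^ (1/α - 1) * τ⁻¹| •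
          ((1 + τ * (f u) ^ α)^2)⁻¹ := by
        rw [integral_image_eq_integral_abs_deriv_smul measurableSet_Ioi hderiv hinj]
    _ = ∫ u in Ioi (0:ℝ), (α⁻¹ * τ ^ (-(1/α))) * (u ^ (1/α - 1) * ((1+u)^2)⁻¹) := by
        apply setIntegral_congr_fun measurableSet_Ioi
        intro u hu
        have h0 : (0:ℝ) < u := hu
        have hd0 : (0:ℝ) < u/τ := div_pos h0 hτ
        have hfu : τ * (f u) ^ α = u := by
          simp only [hf]
          rw [← Real.rpow_mul hd0.le, one_div, inv_mul_cancel₀ hα0.ne', Real.rpow_one]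
          field_simp
        have habs : |(1/α) * (u/τ) ^ (1/α - 1) * τ⁻¹| = (1/α) * (u/τ) ^ (1/α - 1) * τ⁻¹ := by
          apply abs_of_pos
          have := Real.rpow_pos_of_pos hd0 (1/α - 1)
          positivity
        simp only [smul_eq_mul]
        rw [hfu, habs]
        have e1 : (u/τ) ^ (1/α - 1) = u ^ (1/α - 1) * (τ ^ (1/α - 1))⁻¹ := by
          rw [Real.div_rpow h0.le hτ.le, div_eq_mul_inv]
        have e2 : (τ ^ (1/α - 1) : ℝ)⁻¹ * τ⁻¹ = τ ^ (-(1/α)) := by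
          rw [← Real.rpow_neg hτ.le, ← Real.rpow_neg_one τ, ← Real.rpow_add hτ]
          ring_nf
        rw [e1, ← e2]
        ring
    _ = (α⁻¹ * τ ^ (-(1/α))) * ∫ u in Ioi (0:ℝ), u ^ (1/α - 1) * ((1+u)^2)⁻¹ :=
        MeasureTheory.integral_const_mul _ _

lemma integral_g_value (α τ : ℝ) (hα : 1 < α) (hτ : 0 < τ) :
    ∫ x in Ioi (0:ℝ), ((1 + τ * x ^ α)^2)⁻¹
      = π * (α - 1) / (α ^ 2 * Real.sin (π / α)) * τ ^ (-1/α) := by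
  have hα0 : (0:ℝ) < α := by linarith
  have hc : (0:ℝ) < 1/α := by positivity
  have hc1 : (1:ℝ)/α < 1 := by rw [div_lt_one hα0]; exact hα
  have hIoo : ∫ x in Ioo (0:ℝ) 1, x ^ (1/α - 1) * (1-x) ^ (1 - 1/α)
      = (1 - 1/α) * (π / Real.sin (π * (1/α))) := by
    rw [← MeasureTheory.integral_Ioc_eq_integral_Ioo,
      ← intervalIntegral.integral_of_le zero_le_one]
    exact beta_real _ hc hc1
  rw [integral_g α τ hα hτ, ← subst_one (1/α) hc hc1, hIoo]
  have hs : Real.sin (π * (1/α)) = Real.sin (π / α) := by rw [mul_one_div]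
  have hsin : 0 < Real.sin (π / α) := by
    apply Real.sin_pos_of_pos_of_lt_pi
    · positivity
    · rw [div_lt_iff₀ hα0]; nlinarith [Real.pi_pos]
  rw [hs, show (-1/α : ℝ) = -(1/α) by ring]
  field_simp

lemma g_anti (α τ : ℝ) (hα : 1 < α) (hτ : 0 < τ) :
    AntitoneOn (fun x : ℝ => ((1 + τ * x ^ α)^2)⁻¹) (Ici 0) := by
  intro x hx y hy hxy
  have hx0 : (0:ℝ) ≤ x := hx
  have hxa : (0:ℝ) ≤ x ^ α := Real.rpow_nonneg hx0 α
  have h1 : 1 + τ * x ^ α ≤ 1 + τ * y ^ α := by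
    have := Real.rpow_le_rpow hx0 hxy (by linarith : (0:ℝ) ≤ α)
    nlinarith
  have h2 : (0:ℝ) < 1 + τ * x ^ α := by nlinarith
  have h3 : (0:ℝ) < (1 + τ * x ^ α)^2 := by positivity
  exact inv_anti₀ h3 (pow_le_pow_left₀ h2.le h1 2)

lemma g_nonneg (α τ : ℝ) (hτ : 0 < τ) {x : ℝ} (hx : 0 ≤ x) :
    (0:ℝ) ≤ ((1 + τ * x ^ α)^2)⁻¹ := by
  have hxa : (0:ℝ) ≤ x ^ α := Real.rpow_nonneg hx α
  positivity

lemma g_le_one (α τ : ℝ) (hτ : 0 < τ) {x : ℝ} (hx : 0 ≤ x) :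
    ((1 + τ * x ^ α)^2)⁻¹ ≤ 1 := by
  have hxa : (0:ℝ) ≤ x ^ α := Real.rpow_nonneg hx α
  apply inv_le_one_of_one_le₀
  have ht : (0:ℝ) ≤ τ * x ^ α := mul_nonneg hτ.le hxa
  nlinarith

lemma g_cont (α τ : ℝ) (hα : 1 < α) (hτ : 0 < τ) :
    ContinuousOn (fun x : ℝ => ((1 + τ * x ^ α)^2)⁻¹) (Ici 0) := by
  apply ContinuousOn.inv₀
  · exact ((continuous_const.add
      (continuous_const.mul (Real.continuous_rpow_const (by linarith)))).pow 2).continuousOn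
  · intro x hx
    have h1 : (0:ℝ) ≤ x ^ α := Real.rpow_nonneg hx α
    positivity

lemma g_bound_tail (α τ : ℝ) (hα : 1 < α) (hτ : 0 < τ) {x : ℝ} (hx : 0 < x) :
    ((1 + τ * x ^ α)^2)⁻¹ ≤ τ⁻¹^2 * x ^ (-(2*α)) := by
  have hxa : (0:ℝ) < x ^ α := Real.rpow_pos_of_pos hx α
  have h1 : ((1 + τ * x ^ α)^2)⁻¹ ≤ ((τ * x ^ α)^2)⁻¹ := by
    apply inv_anti₀ (by positivity)
    nlinarith
  have h3 : ((x ^ α)^2 : ℝ) = x ^ (2*α) := by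
    rw [← Real.rpow_natCast (x ^ α) 2, ← Real.rpow_mul hx.le]
    norm_num [mul_comm]
  have h2 : ((τ * x ^ α)^2 : ℝ)⁻¹ = τ⁻¹^2 * x ^ (-(2*α)) := by
    rw [mul_pow, mul_inv, h3, ← Real.rpow_neg hx.le, inv_pow]
  rw [← h2]; exact h1

lemma g_integrable (α τ : ℝ) (hα : 1 < α) (hτ : 0 < τ) :
    IntegrableOn (fun x : ℝ => ((1 + τ * x ^ α)^2)⁻¹) (Ioi 0) := by
  rw [← Ioc_union_Ioi_eq_Ioi (zero_le_one : (0:ℝ) ≤ 1)]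
  apply MeasureTheory.IntegrableOn.union
  · apply MeasureTheory.Integrable.mono' (g := fun _ : ℝ => (1:ℝ))
    · exact MeasureTheory.integrableOn_const (by simp)
    · exact ((g_cont α τ hα hτ).mono (fun x hx => le_of_lt hx.1)).aestronglyMeasurable
        measurableSet_Ioc
    · filter_upwards [MeasureTheory.ae_restrict_mem measurableSet_Ioc] with x hx
      rw [Real.norm_eq_abs, abs_of_nonneg (g_nonneg α τ hτ hx.1.le)]
      exact g_le_one α τ hτ hx.1.le
  · apply MeasureTheory.Integrable.mono'
      (g := fun x : ℝ => τ⁻¹^2 * x ^ (-(2*α)))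
    · exact (integrableOn_Ioi_rpow_of_lt (by linarith) one_pos).const_mul _
    · exact ((g_cont α τ hα hτ).mono (fun x (hx : x ∈ Ioi (1:ℝ)) => le_of_lt (show (0:ℝ) < x from lt_trans one_pos hx))).aestronglyMeasurable
        measurableSet_Ioi
    · filter_upwards [MeasureTheory.ae_restrict_mem measurableSet_Ioi] with x hx
      have hx1 : (0:ℝ) < x := lt_trans one_pos hx
      rw [Real.norm_eq_abs, abs_of_nonneg (g_nonneg α τ hτ hx1.le)]
      exact g_bound_tail α τ hα hτ hx1

lemma g_summable (α τ : ℝ) (hα : 1 < α) (hτ : 0 < τ) :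
    Summable (fun k : ℕ => ((1 + τ * ((k:ℝ)+1) ^ α)^2)⁻¹) := by
  have hb : Summable (fun k : ℕ => τ⁻¹^2 * ((k:ℝ)+1) ^ (-(2*α))) := by
    have h1 : Summable (fun n : ℕ => (n:ℝ) ^ (-(2*α))) :=
      Real.summable_nat_rpow.mpr (by linarith)
    have h2 := h1.comp_injective Nat.succ_injective
    apply Summable.mul_left
    apply h2.congr
    intro k
    have hc : ((Nat.succ k : ℕ) : ℝ) = (k:ℝ) + 1 := by push_cast; ring
    simp only [Function.comp_apply, hc]
  apply Summable.of_nonneg_of_le _ _ hb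
  · intro k
    exact g_nonneg α τ hτ (by positivity)
  · intro k
    exact g_bound_tail α τ hα hτ (by positivity)

/-- If `τ > 0` solves `∑_{i=1}^∞ i^{-α}/(i^{-α} + τ) = n` with `α > 1` and
`n ≥ 1`, and `Ω` is defined by `n Ω = ∑_{i=1}^∞ (i^{-α}/(i^{-α} + τ))²`, then
`π(α-1)/(α² sin(π/α)) τ^{-1/α} - 1 ≤ n Ω ≤ π(α-1)/(α² sin(π/α)) τ^{-1/α}`. -/
theorem covariance_statistic_power_law_bounds
    (α n τ Ω : ℝ) (hα : 1 < α) (hn : 1 ≤ n) (hτ : 0 < τ)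
    (hsum : ∑' i : ℕ+, (i : ℝ) ^ (-α) / ((i : ℝ) ^ (-α) + τ) = n)
    (hΩ : n * Ω = ∑' i : ℕ+, ((i : ℝ) ^ (-α) / ((i : ℝ) ^ (-α) + τ)) ^ 2) :
    Real.pi * (α - 1) / (α ^ 2 * Real.sin (Real.pi / α)) * τ ^ (-1 / α) - 1 ≤ n * Ω ∧
      n * Ω ≤ Real.pi * (α - 1) / (α ^ 2 * Real.sin (Real.pi / α)) * τ ^ (-1 / α) := by
  set g : ℝ → ℝ := fun x => ((1 + τ * x ^ α)^2)⁻¹ with hg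
  -- pointwise identification of the summand with g
  have hpt : ∀ i : ℕ+, ((i : ℝ) ^ (-α) / ((i : ℝ) ^ (-α) + τ)) ^ 2 = g (i : ℝ) := by
    intro i
    have hi : (0:ℝ) < (i:ℝ) := by exact_mod_cast i.pos
    have hia : (0:ℝ) < (i:ℝ) ^ α := Real.rpow_pos_of_pos hi α
    have h1 : (i : ℝ) ^ (-α) = ((i:ℝ) ^ α)⁻¹ := by
      rw [Real.rpow_neg hi.le]
    have h2 : (i : ℝ) ^ (-α) / ((i : ℝ) ^ (-α) + τ) = (1 + τ * (i:ℝ) ^ α)⁻¹ := by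
      rw [h1, div_eq_mul_inv, ← mul_inv]
      congr 1
      rw [mul_add, mul_inv_cancel₀ hia.ne']
      ring
    rw [h2, inv_pow]
  -- rewrite the ℕ+-sum as an ℕ-sum
  have htsum : ∑' i : ℕ+, ((i : ℝ) ^ (-α) / ((i : ℝ) ^ (-α) + τ)) ^ 2
      = ∑' k : ℕ, g ((k:ℝ) + 1) := by
    rw [tsum_congr hpt]
    rw [← Equiv.pnatEquivNat.symm.tsum_eq (fun i : ℕ+ => g (i : ℝ))]
    apply tsum_congr
    intro k
    have : ((Equiv.pnatEquivNat.symm k : ℕ+) : ℝ) = (k:ℝ) + 1 := by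
      simp [Equiv.pnatEquivNat, Nat.succPNat]
    rw [this]
  set S : ℝ := ∑' k : ℕ, g ((k:ℝ) + 1) with hS
  set I : ℝ := ∫ x in Ioi (0:ℝ), g x with hI
  have hIval : I = π * (α - 1) / (α ^ 2 * Real.sin (π / α)) * τ ^ (-1/α) :=
    integral_g_value α τ hα hτ
  have hint : IntegrableOn g (Ioi 0) := g_integrable α τ hα hτ
  have hnonneg_ae : 0 ≤ᵐ[MeasureTheory.volume.restrict (Ioi (0:ℝ))] g := by
    filter_upwards [MeasureTheory.ae_restrict_mem measurableSet_Ioi] with x hx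
    exact g_nonneg α τ hτ (le_of_lt hx)
  -- upper bound : S ≤ I
  have hupper : S ≤ I := by
    apply Real.tsum_le_of_sum_range_le
    · intro k
      exact g_nonneg α τ hτ (by positivity)
    · intro N
      have ha : AntitoneOn g (Icc (0:ℝ) (0 + N)) :=
        (g_anti α τ hα hτ).mono (fun x hx => hx.1)
      have h1 := ha.sum_le_integral
      have h2 : ∀ i ∈ Finset.range N, g ((0:ℝ) + ((i:ℕ)+1:ℕ)) = g ((i:ℝ)+1) := by
        intro i _
        norm_num
      rw [Finset.sum_congr rfl h2] at h1
      refine le_trans h1 ?_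
      rw [intervalIntegral.integral_of_le (by positivity)]
      apply MeasureTheory.setIntegral_mono_set hint hnonneg_ae
      apply HasSubset.Subset.eventuallyLE
      intro x hx
      exact hx.1
  -- lower bound : I ≤ 1 + S
  have hsplit : I = (∫ x in Ioc (0:ℝ) 1, g x) + ∫ x in Ioi (1:ℝ), g x := by
    rw [hI, ← Ioc_union_Ioi_eq_Ioi (zero_le_one : (0:ℝ) ≤ 1)]
    apply MeasureTheory.setIntegral_union (Ioc_disjoint_Ioi le_rfl) measurableSet_Ioi
    · exact hint.mono_set (fun x hx => hx.1)
    · exact hint.mono_set (fun x hx => show (0:ℝ) < x from lt_trans one_pos hx)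
  have hpart1 : (∫ x in Ioc (0:ℝ) 1, g x) ≤ 1 := by
    have h1 : (∫ x in Ioc (0:ℝ) 1, g x) ≤ ∫ _ in Ioc (0:ℝ) 1, (1:ℝ) := by
      apply MeasureTheory.setIntegral_mono_on
        (hint.mono_set (fun x hx => hx.1)) (MeasureTheory.integrableOn_const (by simp))
        measurableSet_Ioc
      intro x hx
      exact g_le_one α τ hτ hx.1.le
    simpa using h1
  have hsummable : Summable (fun k : ℕ => g ((k:ℝ)+1)) := g_summable α τ hα hτ
  have hpart2 : (∫ x in Ioi (1:ℝ), g x) ≤ S := by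
    have hU : (⋃ N : ℕ, Ioc (1:ℝ) (1 + N)) = Ioi (1:ℝ) := by
      ext x
      simp only [mem_iUnion, mem_Ioc, mem_Ioi]
      constructor
      · rintro ⟨N, h1, _⟩; exact h1
      · intro h1
        obtain ⟨N, hN⟩ := exists_nat_ge (x - 1)
        exact ⟨N, h1, by linarith⟩
    have htend := MeasureTheory.tendsto_setIntegral_of_monotone
      (s := fun N : ℕ => Ioc (1:ℝ) (1 + N)) (f := g)
      (fun N => measurableSet_Ioc)
      (fun a b hab => Ioc_subset_Ioc le_rfl (by simp [hab]))
      (by rw [hU]; exact hint.mono_set (fun x hx => show (0:ℝ) < x from lt_trans one_pos hx))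
    rw [hU] at htend
    apply le_of_tendsto htend
    filter_upwards with N
    have ha : AntitoneOn g (Icc (1:ℝ) (1 + N)) :=
      (g_anti α τ hα hτ).mono (fun x hx => le_trans zero_le_one hx.1)
    have h1 := ha.integral_le_sum
    rw [intervalIntegral.integral_of_le (le_add_of_nonneg_right N.cast_nonneg)] at h1
    refine le_trans h1 ?_
    have h2 : ∀ i ∈ Finset.range N, g ((1:ℝ) + (i:ℕ)) = g ((i:ℝ)+1) := by
      intro i _
      norm_num [add_comm]
    rw [Finset.sum_congr rfl h2]
    exact Summable.sum_le_tsum (Finset.range N)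
      (fun k _ => g_nonneg α τ hτ (by positivity)) hsummable
  have hfinal : n * Ω = S := by rw [hΩ, htsum]
  constructor
  · rw [hfinal, ← hIval]
    linarith [hsplit, hpart1, hpart2]
  · rw [hfinal, ← hIval]
    exact hupper
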